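/- Suppose real numbers α, β, γ ≥ 0 with α + β + γ < 1, and real α1, β1 ∈ [0,1] with γ1 = 1 - α1 - β1 ∈ [0,1], satisfy the five algebraic conditions u1 = u2 = u3 = u4 = u5 = 0 with a constant J ≠ 12. Then α ≠ 0, β ≠ 0, and γ ≠ 0. -/
import Mathlib

set_option maxHeartbeats 1000000


theorem abc_nonzero (α β γ α1 β1 γ1 J A B C : ℝ)
    (hJ : J ≠ 12)
    (hαpos : 0 ≤ α) (hβpos : 0 ≤ β) (hγpos : 0 ≤ γ) (hsum : α + β + γ < 1)
    (hα1 : 0 ≤ α1 ∧ α1 ≤ 1) (hβ1 : 0 ≤ β1 ∧ β1 ≤ 1) (hγ1mem : 0 ≤ γ1 ∧ γ1 ≤ 1)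
    (hγ1 : γ1 = 1 - α1 - β1)
    (hA : A = α1 ^ 2 - α ^ 2) (hB : B = β1 ^ 2 - β ^ 2)
    (hC : C = γ1 ^ 2 - A - B - γ ^ 2)
    (hu1 : J * B ^ 2 = 12 * B * β1 ^ 2)
    (hu2 : 2 * J * B * C = 4 * ((1 - α1) * (1 - 6 * β1) * B
        + (1/2) * (1 - 2 * β1) * (1 - 3 * β1) * C))
    (hu3 : J * (2 * A * B + C ^ 2) = 4 * ((2 - 3 * β1) * (1 - β1) * A
        + (2 - 3 * α1) * (1 - α1) * B
        + (1/2) * ((2 - 3 * β1) * (1 - 2 * α1) + (2 - 3 * α1) * (1 - 2 * β1)) * C))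
    (hu4 : 2 * J * A * C = 4 * ((1 - β1) * (1 - 6 * α1) * A
        + (1/2) * (1 - 2 * α1) * (1 - 3 * α1) * C))
    (hu5 : J * A ^ 2 = 12 * A * α1 ^ 2) :
    α ≠ 0 ∧ β ≠ 0 ∧ γ ≠ 0 := by
  refine ⟨?_, ?_, ?_⟩
  · -- α ≠ 0
    intro h
    subst h
    have hA' : A = α1 ^ 2 := by linear_combination hA
    have h12 : (J - 12) * A ^ 2 = 0 := by linear_combination hu5 - 12 * A * hA'
    have hA0 : A = 0 := by
      rcases mul_eq_zero.mp h12 with h | h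
      · exact absurd (by linarith : J = 12) hJ
      · exact pow_eq_zero_iff two_ne_zero |>.mp h
    have hα10 : α1 = 0 := by
      have : α1 ^ 2 = 0 := by linear_combination hA0 - hA'
      exact pow_eq_zero_iff two_ne_zero |>.mp this
    rw [hα10, hA0] at hu4 hu3
    have hC0 : C = 0 := by linear_combination (-1/2 : ℝ) * hu4
    rw [hC0] at hu3
    have hB0 : B = 0 := by linear_combination (-1/8 : ℝ) * hu3
    have h2 : (β - β1) * (β + β1) = 0 := by linear_combination hB - hB0
    have hβv : β = β1 := by
      rcases mul_eq_zero.mp h2 with h | h <;> linarith only [h, hβpos, hβ1.1]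
    have h3 : (γ - γ1) * (γ + γ1) = 0 := by linear_combination hC - hC0 - hA0 - hB0
    have hγv : γ = γ1 := by
      rcases mul_eq_zero.mp h3 with h | h <;> linarith only [h, hγpos, hγ1mem.1]
    rw [hγ1] at hγv
    linarith only [hsum, hβv, hγv, hα10]
  · -- β ≠ 0
    intro h
    subst h
    have hB' : B = β1 ^ 2 := by linear_combination hB
    have h12 : (J - 12) * B ^ 2 = 0 := by linear_combination hu1 - 12 * B * hB'
    have hB0 : B = 0 := by
      rcases mul_eq_zero.mp h12 with h | h
      · exact absurd (by linarith : J = 12) hJ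
      · exact pow_eq_zero_iff two_ne_zero |>.mp h
    have hβ10 : β1 = 0 := by
      have : β1 ^ 2 = 0 := by linear_combination hB0 - hB'
      exact pow_eq_zero_iff two_ne_zero |>.mp this
    rw [hβ10, hB0] at hu2 hu3
    have hC0 : C = 0 := by linear_combination (-1/2 : ℝ) * hu2
    rw [hC0] at hu3
    have hA0 : A = 0 := by linear_combination (-1/8 : ℝ) * hu3
    have h2 : (α - α1) * (α + α1) = 0 := by linear_combination hA - hA0
    have hαv : α = α1 := by
      rcases mul_eq_zero.mp h2 with h | h <;> linarith only [h, hαpos, hα1.1]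
    have h3 : (γ - γ1) * (γ + γ1) = 0 := by linear_combination hC - hC0 - hA0 - hB0
    have hγv : γ = γ1 := by
      rcases mul_eq_zero.mp h3 with h | h <;> linarith only [h, hγpos, hγ1mem.1]
    rw [hγ1] at hγv
    linarith only [hsum, hαv, hγv, hβ10]
  · -- γ ≠ 0
    intro h
    subst h
    subst hγ1
    have hSval : A + B + C = (1 - α1 - β1) ^ 2 := by linear_combination hC
    have hsum5 : J * (A + B + C) ^ 2 = 12 * (1 - α1 - β1) ^ 2 * (A + B + C) := by
      linear_combination hu1 + hu2 + hu3 + hu4 + hu5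
    have h4 : (J - 12) * (1 - α1 - β1) ^ 4 = 0 := by
      linear_combination hsum5
        + (12 * (1 - α1 - β1) ^ 2 - J * ((A + B + C) + (1 - α1 - β1) ^ 2)) * hSval
    have ht : 1 - α1 - β1 = 0 := by
      rcases mul_eq_zero.mp h4 with h | h
      · exact absurd (by linarith : J = 12) hJ
      · exact pow_eq_zero_iff (by norm_num : (4 : ℕ) ≠ 0) |>.mp h
    have hα1e : α1 = 1 - β1 := by linarith
    subst hα1e
    have hCv : C = -A - B := by linear_combination hC
    rw [hCv] at hu2 hu3 hu4
    have hβ1le : β1 ≤ 1 := hβ1.2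
    have hβ1ge : 0 ≤ β1 := hβ1.1
    by_cases hBz : B = 0
    · by_cases hAz : A = 0
      · rw [hAz] at hA
        rw [hBz] at hB
        have h1 : (α - (1 - β1)) * (α + (1 - β1)) = 0 := by linear_combination hA
        have hαv : α = 1 - β1 := by
          rcases mul_eq_zero.mp h1 with h | h <;> linarith only [h, hαpos, hβ1le]
        have h2 : (β - β1) * (β + β1) = 0 := by linear_combination hB
        have hβv : β = β1 := by
          rcases mul_eq_zero.mp h2 with h | h <;> linarith only [h, hβpos, hβ1ge]
        linarith only [hsum, hαv, hβv]
      · -- B = 0, A ≠ 0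
        rw [hBz] at hu2 hu4
        have hq : (1 - 2 * β1) * (1 - 3 * β1) * A = 0 := by
          linear_combination (1/2 : ℝ) * hu2
        have hq' : (1 - 2 * β1) * (1 - 3 * β1) = 0 := by
          rcases mul_eq_zero.mp hq with h | h
          · exact h
          · exact absurd h hAz
        have hJA : J * A = 12 * (1 - β1) ^ 2 :=
          mul_left_cancel₀ hAz (by linear_combination hu5)
        have hq2 : -2 * (J * A) = 4 * (1 - β1) * (6 * β1 - 5) - 2 * (2 * β1 - 1) * (3 * β1 - 2) :=
          mul_left_cancel₀ hAz (by linear_combination hu4)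
        rcases mul_eq_zero.mp hq' with h | h
        · have hb : β1 = 1 / 2 := by linarith
          rw [hb] at hJA hq2; norm_num at hJA hq2; linarith only [hJA, hq2]
        · have hb : β1 = 1 / 3 := by linarith
          rw [hb] at hJA hq2; norm_num at hJA hq2; linarith only [hJA, hq2]
    · by_cases hAz : A = 0
      · -- A = 0, B ≠ 0
        rw [hAz] at hu2 hu4
        have hq : (2 * β1 - 1) * (3 * β1 - 2) * B = 0 := by
          linear_combination (1/2 : ℝ) * hu4
        have hq' : (2 * β1 - 1) * (3 * β1 - 2) = 0 := by
          rcases mul_eq_zero.mp hq with h | h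
          · exact h
          · exact absurd h hBz
        have hJB : J * B = 12 * β1 ^ 2 :=
          mul_left_cancel₀ hBz (by linear_combination hu1)
        have hq2 : -2 * (J * B) = 4 * β1 * (1 - 6 * β1) - 2 * (1 - 2 * β1) * (1 - 3 * β1) :=
          mul_left_cancel₀ hBz (by linear_combination hu2)
        rcases mul_eq_zero.mp hq' with h | h
        · have hb : β1 = 1 / 2 := by linarith
          rw [hb] at hJB hq2; norm_num at hJB hq2; linarith only [hJB, hq2]
        · have hb : β1 = 2 / 3 := by linarith
          rw [hb] at hJB hq2; norm_num at hJB hq2; linarith only [hJB, hq2]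
      · -- A ≠ 0, B ≠ 0
        have hJA : J * A = 12 * (1 - β1) ^ 2 :=
          mul_left_cancel₀ hAz (by linear_combination hu5)
        have hJB : J * B = 12 * β1 ^ 2 :=
          mul_left_cancel₀ hBz (by linear_combination hu1)
        have hJne : J ≠ 0 := by
          intro h0
          rw [h0, zero_mul] at hJA hJB
          nlinarith only [hJA, hJB, sq_nonneg β1, sq_nonneg (1 - β1)]
        have hβ1ne0 : β1 ≠ 0 := by
          intro h0
          rw [h0] at hJB
          apply hBz
          have : J * B = 0 := by linear_combination hJB
          exact (mul_eq_zero.mp this).resolve_left hJne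
        have hβ1ne1 : β1 ≠ 1 := by
          intro h0
          rw [h0] at hJA
          apply hAz
          have : J * A = 0 := by linear_combination hJA
          exact (mul_eq_zero.mp this).resolve_left hJne
        have hβ1pos : 0 < β1 := lt_of_le_of_ne hβ1ge (Ne.symm hβ1ne0)
        have hβ1lt : β1 < 1 := lt_of_le_of_ne hβ1le hβ1ne1
        have hABeq : A * β1 ^ 2 = B * (1 - β1) ^ 2 :=
          mul_left_cancel₀ hJne (by linear_combination β1 ^ 2 * hJA - (1 - β1) ^ 2 * hJB)
        have hABpos : 0 < A * B := by
          have h1 : 0 < B ^ 2 * (1 - β1) ^ 2 := by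
            have hb1 : (1 : ℝ) - β1 ≠ 0 := by intro h0; apply hβ1ne1; linarith
            positivity
          have h2 : A * B * β1 ^ 2 = B ^ 2 * (1 - β1) ^ 2 := by linear_combination B * hABeq
          have h3 : 0 < β1 ^ 2 := by positivity
          nlinarith only [h1, h2, h3]
        have hE1 : (6 * β1 - 1) * ((β1 + 1) * A - (β1 - 1) * B) = 0 := by
          linear_combination (-1/2 : ℝ) * hu2 - (A + B) * hJB
        rcases mul_eq_zero.mp hE1 with h6 | hlin
        · have hb : β1 = 1 / 6 := by linarith
          have hE2 : (5 - 6 * β1) * ((2 - β1) * B + β1 * A) = 0 := by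
            linear_combination (-1/2 : ℝ) * hu4 - (A + B) * hJA
          rw [hb] at hE2 hABeq
          have hA25 : A = 25 * B := by linear_combination 36 * hABeq
          rw [hA25] at hE2
          apply hBz
          linarith only [hE2]
        · have key : (β1 + 1) * (A * B) = (β1 - 1) * B ^ 2 := by
            linear_combination B * hlin
          have hB2 : 0 < B ^ 2 := by positivity
          linarith only [key,
            mul_pos (show (0:ℝ) < β1 + 1 by linarith only [hβ1ge]) hABpos,
            mul_pos (show (0:ℝ) < 1 - β1 by linarith only [hβ1lt]) hB2]
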